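/- For every real number r, every natural number p, and every real x with |x| < 1, the binomial series identity Σ_{n=0}^∞ C(r,n) n^p x^n = (1 + x)^r Σ_{k=0}^p S(p,k) r(r−1)⋯(r−k+1) (x/(1+x))^k holds (with the convention 0^0 = 1), where C(r,n) = r(r−1)⋯(r−n+1)/n! is the generalized binomial coefficient and the series on the left converges absolutely. -/

import Mathlib

open Finset Real Filter

/-- Stirling numbers of the second kind. -/
def stirling2 : ℕ → ℕ → ℕ
  | 0, 0 => 1
  | 0, _ + 1 => 0
  | _ + 1, 0 => 0
  | n + 1, k + 1 => (k + 1) * stirling2 n (k + 1) + stirling2 n k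

noncomputable def bc (r : ℝ) (n : ℕ) : ℝ := (descPochhammer ℝ n).eval r / n.factorial

lemma bc_zero (r : ℝ) : bc r 0 = 1 := by simp [bc]

lemma bc_succ (r : ℝ) (n : ℕ) : bc r (n + 1) * (n + 1) = (r - n) * bc r n := by
  have h1 : ((n + 1).factorial : ℝ) = (n + 1) * n.factorial := by
    rw [Nat.factorial_succ]; push_cast; ring
  have h2 : (n.factorial : ℝ) ≠ 0 := Nat.cast_ne_zero.2 n.factorial_ne_zero
  have h3 : ((n : ℝ) + 1) ≠ 0 := by positivity
  rw [bc, bc, descPochhammer_succ_eval, h1]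
  field_simp

lemma summable_norm_bc (r : ℝ) (p : ℕ) {y : ℝ} (hy : |y| < 1) :
    Summable fun n : ℕ => ‖bc r n * (n : ℝ) ^ p * y ^ n‖ := by
  have hl1 : (1 + |y|) / 2 < 1 := by linarith
  apply summable_of_ratio_norm_eventually_le hl1
  have t0 : Tendsto (fun n : ℕ => (r + 1) / ((n : ℝ) + 1)) atTop (nhds 0) := by
    have := (tendsto_const_div_atTop_nhds_zero_nat (r + 1)).comp
      (tendsto_add_atTop_nat 1)
    apply this.congr
    intro n
    simp [Function.comp]
  have t1 : Tendsto (fun n : ℕ => |r - n| / ((n : ℝ) + 1)) atTop (nhds 1) := by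
    have h : ∀ n : ℕ, |r - n| / ((n : ℝ) + 1) = |(r + 1) / ((n : ℝ) + 1) - 1| := by
      intro n
      have hn : (0:ℝ) < (n : ℝ) + 1 := by positivity
      have e : (r + 1) / ((n : ℝ) + 1) - 1 = (r - n) / ((n : ℝ) + 1) := by
        field_simp
        ring
      rw [e, abs_div, abs_of_pos hn]
    simp only [h]
    have := (t0.sub_const 1).abs
    simpa using this
  have t2 : Tendsto (fun n : ℕ => (((n : ℝ) + 1) / n) ^ p) atTop (nhds 1) := by
    have base : Tendsto (fun n : ℕ => 1 + 1 / (n : ℝ)) atTop (nhds 1) := by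
      simpa using tendsto_one_div_atTop_nhds_zero_nat.const_add (1:ℝ)
    have h2 : Tendsto (fun n : ℕ => (1 + 1 / (n : ℝ)) ^ p) atTop (nhds 1) := by
      simpa using base.pow p
    apply h2.congr'
    filter_upwards [eventually_gt_atTop 0] with n hn
    have : (n : ℝ) ≠ 0 := Nat.cast_ne_zero.2 hn.ne'
    field_simp
  have tc : Tendsto (fun n : ℕ => |r - n| / ((n : ℝ) + 1) * (((n : ℝ) + 1) / n) ^ p * |y|)
      atTop (nhds |y|) := by
    have := (t1.mul t2).mul_const |y|
    simpa using this
  have hev : ∀ᶠ n : ℕ in atTop,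
      |r - n| / ((n : ℝ) + 1) * (((n : ℝ) + 1) / n) ^ p * |y| < (1 + |y|) / 2 :=
    tc.eventually_lt_const (by linarith)
  filter_upwards [hev, eventually_gt_atTop 0] with n hn hn0
  rw [norm_norm, norm_norm]
  push_cast
  have hnR : (0 : ℝ) < n := by exact_mod_cast hn0
  have hn1 : (0:ℝ) < (n : ℝ) + 1 := by positivity
  have e1 : |bc r (n + 1)| = |r - n| * |bc r n| / ((n : ℝ) + 1) := by
    rw [eq_div_iff hn1.ne']
    have := congrArg abs (bc_succ r n)
    rw [abs_mul, abs_mul, abs_of_pos hn1] at this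
    push_cast at this ⊢
    linarith [this]
  have key : ‖bc r (n + 1) * ((n : ℝ) + 1) ^ p * y ^ (n + 1)‖ =
      (|r - n| / ((n : ℝ) + 1) * (((n : ℝ) + 1) / n) ^ p * |y|) *
        ‖bc r n * (n : ℝ) ^ p * y ^ n‖ := by
    simp only [Real.norm_eq_abs, abs_mul, abs_pow, abs_of_pos hnR, abs_of_pos hn1, pow_succ]
    rw [e1, div_pow]
    field_simp
  calc ‖bc r (n + 1) * ((n : ℝ) + 1) ^ p * y ^ (n + 1)‖
      = (|r - n| / ((n : ℝ) + 1) * (((n : ℝ) + 1) / n) ^ p * |y|) *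
        ‖bc r n * (n : ℝ) ^ p * y ^ n‖ := key
    _ ≤ (1 + |y|) / 2 * ‖bc r n * (n : ℝ) ^ p * y ^ n‖ :=
        mul_le_mul_of_nonneg_right hn.le (norm_nonneg _)

lemma summable_bc (r : ℝ) (p : ℕ) {y : ℝ} (hy : |y| < 1) :
    Summable fun n : ℕ => bc r n * (n : ℝ) ^ p * y ^ n :=
  (summable_norm_bc r p hy).of_norm

lemma hasSum_binomial (r : ℝ) {x : ℝ} (hx : |x| < 1) :
    HasSum (fun n : ℕ => bc r n * x ^ n) ((1 + x) ^ r) := by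
  -- setup
  set s : ℝ := (1 + |x|) / 2 with hs_def
  have hs0 : 0 < s := by positivity
  have hs1 : s < 1 := by simp only [hs_def]; linarith
  have hxs : |x| < s := by simp only [hs_def]; linarith
  have hss : |s| < 1 := by rw [abs_of_pos hs0]; exact hs1
  set t : Set ℝ := Metric.ball (0 : ℝ) s with ht_def
  have ht_open : IsOpen t := Metric.isOpen_ball
  have ht_conn : IsPreconnected t := (convex_ball (0:ℝ) s).isPreconnected
  have hmem : ∀ {y : ℝ}, y ∈ t → |y| < s := by
    intro y hy
    simpa [ht_def, Real.dist_eq] using hy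
  have hx_mem : x ∈ t := by simp [ht_def, Real.dist_eq, abs_of_nonneg, hxs]
  have h0_mem : (0:ℝ) ∈ t := by simp [ht_def, hs0]
  -- the series and its termwise derivative
  set g : ℕ → ℝ → ℝ := fun n z => bc r n * z ^ n with hg_def
  set g' : ℕ → ℝ → ℝ := fun n z => bc r n * (n * z ^ (n - 1)) with hg'_def
  set u : ℕ → ℝ := fun n => |bc r n| * n * s ^ n / s with hu_def
  have hu : Summable u := by
    have := (summable_norm_bc r 1 hss).div_const s
    apply this.congr
    intro n
    simp [hu_def, abs_mul, abs_pow, abs_of_pos hs0, Nat.abs_cast, pow_one]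
  have hg : ∀ n z, HasDerivAt (g n) (g' n z) z := fun n z =>
    (hasDerivAt_pow n z).const_mul (bc r n)
  have hg' : ∀ n, ∀ z ∈ t, ‖g' n z‖ ≤ u n := by
    intro n z hz
    have hz' := (hmem hz)
    simp only [hg'_def, hu_def, Real.norm_eq_abs, abs_mul, abs_pow, Nat.abs_cast]
    cases n with
    | zero => simp
    | succ m =>
      have h1 : |z| ^ (m + 1 - 1) ≤ s ^ m := by
        simpa using pow_le_pow_left₀ (abs_nonneg z) hz'.le m
      have h2 : |bc r (m + 1)| * ↑(m + 1) * s ^ (m + 1) / s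
          = |bc r (m + 1)| * ↑(m + 1) * s ^ m := by
        rw [pow_succ]
        field_simp
      rw [h2]
      calc |bc r (m+1)| * (↑(m + 1) * |z| ^ (m + 1 - 1))
          ≤ |bc r (m+1)| * (↑(m + 1) * s ^ m) := by
            apply mul_le_mul_of_nonneg_left
              (mul_le_mul_of_nonneg_left h1 (by positivity)) (abs_nonneg _)
        _ = |bc r (m+1)| * ↑(m + 1) * s ^ m := by ring
  have hg0 : Summable (fun n => g n 0) := by
    apply (summable_bc r 0 (by simp : |(0:ℝ)| < 1)).congr
    intro n
    simp [hg_def]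
  -- derivative of F on t
  set F : ℝ → ℝ := fun z => ∑' n, g n z with hF_def
  have hF' : ∀ y ∈ t, HasDerivAt F (∑' n, g' n y) y := fun y hy =>
    hasDerivAt_tsum_of_isPreconnected hu ht_open ht_conn
      (fun n z _ => hg n z) hg' h0_mem hg0 hy
  -- the ODE : (1 + y) * F' y = r * F y on t
  have hODE : ∀ y ∈ t, (1 + y) * (∑' n, g' n y) = r * F y := by
    intro y hy
    have hy1 : |y| < 1 := (hmem hy).trans hs1
    have hSum : Summable fun n => g' n y :=
      Summable.of_norm_bounded hu (fun n => hg' n y hy)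
    set T : ℝ := ∑' n, g' n y with hT_def
    have hT : HasSum (fun n => g' n y) T := hSum.hasSum
    -- shift away the vanishing 0-th term
    have h1 : HasSum (fun m => bc r (m+1) * (m+1) * y ^ m) T := by
      have h := (hasSum_nat_add_iff (f := fun n => g' n y) 1).2 (by
        simpa [hg'_def] using hT)
      have e : (fun m => bc r (m+1) * (m+1) * y ^ m) = fun n => g' (n + 1) y := by
        funext m
        simp only [hg'_def, Nat.add_sub_cancel]
        push_cast
        ring
      rw [e]
      exact h
    have h2 : HasSum (fun m => bc r (m+1) * (m+1) * y ^ (m+1)) (y * T) := by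
      have h := h1.mul_left y
      have e : (fun m => bc r (m+1) * (m+1) * y ^ (m+1))
          = fun m => y * (bc r (m+1) * (m+1) * y ^ m) := by
        funext m
        rw [pow_succ]
        ring
      rw [e]
      exact h
    have h3 : HasSum (fun m => bc r (m+2) * (m+2) * y ^ (m+1)) (T - r) := by
      have hb0 : bc r 1 * (1:ℝ) = r := by
        have := bc_succ r 0
        simpa [bc_zero] using this
      have := (hasSum_nat_add_iff (f := fun m => bc r (m+1) * (m+1) * y ^ m) 1).2
        (by
          have hTr : T = (T - r) + ∑ i ∈ range 1, bc r (i+1) * (i+1) * y ^ i := by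
            simp [hb0]
          rw [hTr] at h1
          exact h1)
      have e : (fun m => bc r (m+2) * (m+2) * y ^ (m+1))
          = fun m => bc r (m+1+1) * (↑(m+1) + 1) * y ^ (m+1) := by
        funext m
        push_cast
        ring_nf
      rw [e]
      exact this
    have h4 := h3.add h2
    have hFy : HasSum (fun n => bc r n * y ^ n) (F y) := by
      have hs' : Summable fun n => g n y := by
        apply (summable_bc r 0 hy1).congr
        intro n
        simp [hg_def]
      exact hs'.hasSum
    have h5 : HasSum (fun m => bc r (m+1) * y ^ (m+1)) (F y - 1) := by
      have := (hasSum_nat_add_iff (f := fun n => bc r n * y ^ n) 1).2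
        (by
          have : F y = (F y - 1) + ∑ i ∈ range 1, bc r i * y ^ i := by
            simp [bc_zero]
          rw [this] at hFy
          exact hFy)
      exact this
    have h6 := h5.mul_left r
    -- identify the two series
    have heq : (fun m => bc r (m+2) * (m+2) * y ^ (m+1) + bc r (m+1) * (m+1) * y ^ (m+1))
        = fun m => r * (bc r (m+1) * y ^ (m+1)) := by
      funext m
      have hrec := bc_succ r (m+1)
      push_cast at hrec ⊢
      linear_combination y ^ (m+1) * hrec
    rw [heq] at h4
    have := h4.unique h6
    linarith [this]
  -- h z := F z * (1+z)^(-r) has zero derivative on t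
  have hpos : ∀ y ∈ t, (0:ℝ) < 1 + y := by
    intro y hy
    have := abs_lt.1 ((hmem hy).trans_le hs1.le)
    linarith [this.1]
  set h : ℝ → ℝ := fun z => F z * (1 + z) ^ (-r) with hh_def
  have hderiv : ∀ y ∈ t, HasDerivAt h 0 y := by
    intro y hy
    have hy0 : (0:ℝ) < 1 + y := hpos y hy
    have d1 : HasDerivAt (fun z : ℝ => (1 + z)) 1 y := by
      simpa using (hasDerivAt_id y).const_add 1
    have d2 : HasDerivAt (fun z : ℝ => (1 + z) ^ (-r)) (1 * (-r) * (1 + y) ^ (-r - 1)) y :=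
      d1.rpow_const (Or.inl hy0.ne')
    have d3 : HasDerivAt (fun z => F z * (1 + z) ^ (-r)) _ y := (hF' y hy).mul d2
    convert d3 using 1
    have hrw : (1 + y) ^ (-r) = (1 + y) ^ (-r - 1) * (1 + y) := by
      rw [← Real.rpow_add_one hy0.ne' (-r - 1)]
      ring_nf
    have hode := hODE y hy
    rw [hrw]
    linear_combination (-(1+y) ^ (-r - 1)) * hode
  -- h is constant on t, so F x * (1+x)^(-r) = F 0 = 1
  have hcon : h x = h 0 := by
    apply (convex_ball (0:ℝ) s).is_const_of_fderivWithin_eq_zero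
      (fun y hy => ((hderiv y hy).differentiableAt).differentiableWithinAt)
      _ hx_mem h0_mem
    intro y hy
    rw [fderivWithin_of_isOpen ht_open hy]
    exact ((hderiv y hy).hasFDerivAt).fderiv.trans (by ext z; simp)
  have hF0 : F 0 = 1 := by
    have : HasSum (fun n => g n 0) 1 := by
      have := hasSum_single (f := fun n => g n 0) 0 (fun b hb => by
        simp [hg_def, zero_pow hb])
      simpa [hg_def, bc_zero] using this
    exact this.tsum_eq
  have hrp : (0:ℝ) < (1 + x) ^ r := Real.rpow_pos_of_pos (hpos x hx_mem) r
  have hFx : F x = (1 + x) ^ r := by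
    have h1 : F x * (1 + x) ^ (-r) = 1 := by
      have := hcon
      simp only [hh_def] at this
      rw [this, hF0]
      simp
    rw [Real.rpow_neg (hpos x hx_mem).le] at h1
    field_simp at h1
    linarith [h1]
  have hFx_sum : HasSum (fun n => bc r n * x ^ n) (F x) := by
    have hsx : Summable fun n => g n x := by
      apply (summable_bc r 0 hx).congr
      intro n
      simp [hg_def]
    exact hsx.hasSum
  rw [← hFx]
  exact hFx_sum


lemma stirling2_eq_zero {p k : ℕ} (h : p < k) : stirling2 p k = 0 := by
  induction p generalizing k with
  | zero =>
    cases k with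
    | zero => omega
    | succ k => rfl
  | succ p ih =>
    cases k with
    | zero => omega
    | succ k =>
      show (k + 1) * stirling2 p (k + 1) + stirling2 p k = 0
      rw [ih (by omega), ih (by omega)]
      simp

lemma pow_eq_sum_stirling (p : ℕ) (y : ℝ) :
    y ^ p = ∑ k ∈ range (p + 1), (stirling2 p k : ℝ) * (descPochhammer ℝ k).eval y := by
  induction p with
  | zero => simp [stirling2]
  | succ p ih =>
    have key : ∀ k : ℕ, y * (descPochhammer ℝ k).eval y
        = (descPochhammer ℝ (k+1)).eval y + k * (descPochhammer ℝ k).eval y := by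
      intro k
      rw [descPochhammer_succ_eval]
      ring
    have expand : y ^ (p + 1)
        = (∑ k ∈ range (p + 1), (stirling2 p k : ℝ) * (descPochhammer ℝ (k+1)).eval y)
          + ∑ k ∈ range (p + 1), ((k : ℝ) * stirling2 p k) * (descPochhammer ℝ k).eval y := by
      have : y ^ (p + 1) = y * y ^ p := by ring
      rw [this, ih, Finset.mul_sum, ← Finset.sum_add_distrib]
      apply Finset.sum_congr rfl
      intro k _
      linear_combination ((stirling2 p k : ℝ)) * key k
    -- second sum: shift index
    have second : ∑ k ∈ range (p + 1), ((k : ℝ) * stirling2 p k) * (descPochhammer ℝ k).eval y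
        = ∑ j ∈ range (p + 1), (((j:ℝ) + 1) * stirling2 p (j+1)) * (descPochhammer ℝ (j+1)).eval y := by
      rw [Finset.sum_range_succ' (fun k => ((k : ℝ) * stirling2 p k) * (descPochhammer ℝ k).eval y) p,
        Finset.sum_range_succ (fun j => (((j:ℝ) + 1) * stirling2 p (j+1)) * (descPochhammer ℝ (j+1)).eval y) p,
        stirling2_eq_zero (Nat.lt_succ_self p)]
      push_cast
      simp
    rw [expand, second, ← Finset.sum_add_distrib,
      Finset.sum_range_succ' (fun k => (stirling2 (p+1) k : ℝ) * (descPochhammer ℝ k).eval y) (p+1)]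
    have hzero : ((stirling2 (p+1) 0 : ℝ)) * (descPochhammer ℝ 0).eval y = 0 := by
      show ((0:ℕ) : ℝ) * _ = 0
      simp
    rw [hzero, add_zero]
    apply Finset.sum_congr rfl
    intro j _
    show (stirling2 p j : ℝ) * _ + ((j:ℝ) + 1) * (stirling2 p (j+1) : ℝ) * _
      = (((j + 1) * stirling2 p (j+1) + stirling2 p j : ℕ) : ℝ) * _
    push_cast
    ring

lemma hasSum_desc (r : ℝ) {x : ℝ} (hx : |x| < 1) (k : ℕ) :
    HasSum (fun n : ℕ => bc r n * (descPochhammer ℝ k).eval (n : ℝ) * x ^ n)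
      ((descPochhammer ℝ k).eval r * x ^ k * (1 + x) ^ (r - k)) := by
  have hbase := hasSum_binomial (r - k) hx
  have h1 := hbase.mul_left ((descPochhammer ℝ k).eval r * x ^ k)
  have hsplit : ∀ m : ℕ, (descPochhammer ℝ (k + m)).eval r
      = (descPochhammer ℝ k).eval r * (descPochhammer ℝ m).eval (r - k) := by
    intro m
    have := congrArg (Polynomial.eval r) (descPochhammer_mul (R := ℝ) k m)
    rw [Polynomial.eval_mul, Polynomial.eval_comp] at this
    rw [← this]
    congr 1
    simp
  have key : ∀ m : ℕ,
      (descPochhammer ℝ k).eval r * x ^ k * (bc (r - k) m * x ^ m)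
        = bc r (m + k) * (descPochhammer ℝ k).eval ((m + k : ℕ) : ℝ) * x ^ (m + k) := by
    intro m
    have hd : (descPochhammer ℝ k).eval ((m + k : ℕ) : ℝ) = ((m + k).descFactorial k : ℝ) := by
      exact_mod_cast descPochhammer_eval_eq_descFactorial ℝ (m + k) k
    have hfac : ((m.factorial : ℝ)) * ((m + k).descFactorial k : ℝ) = ((m + k).factorial : ℝ) := by
      have := Nat.factorial_mul_descFactorial (show k ≤ m + k by omega)
      rw [Nat.add_sub_cancel] at this
      exact_mod_cast this
    have hmk : ((m + k).factorial : ℝ) ≠ 0 := Nat.cast_ne_zero.2 (Nat.factorial_ne_zero _)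
    have hm : ((m.factorial : ℝ)) ≠ 0 := Nat.cast_ne_zero.2 (Nat.factorial_ne_zero _)
    rw [hd, bc, bc, show m + k = k + m from add_comm m k, hsplit m, pow_add]
    field_simp
    rw [Nat.add_comm k m]
    linear_combination (-1 * (descPochhammer ℝ k).eval r * (descPochhammer ℝ m).eval (r - k)
      * x ^ k * x ^ m) * hfac
  have h2 : HasSum
      (fun m => bc r (m + k) * (descPochhammer ℝ k).eval ((m + k : ℕ) : ℝ) * x ^ (m + k))
      ((descPochhammer ℝ k).eval r * x ^ k * (1 + x) ^ (r - k)) := by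
    have e : (fun m => bc r (m + k) * (descPochhammer ℝ k).eval ((m + k : ℕ) : ℝ) * x ^ (m + k))
        = fun m => (descPochhammer ℝ k).eval r * x ^ k * (bc (r - k) m * x ^ m) := by
      funext m
      rw [key m]
    rw [e]
    exact h1
  have h3 := (hasSum_nat_add_iff
    (f := fun n => bc r n * (descPochhammer ℝ k).eval (n : ℝ) * x ^ n) k).1 h2
  have hz : ∑ i ∈ range k, bc r i * (descPochhammer ℝ k).eval (i : ℝ) * x ^ i = 0 := by
    apply Finset.sum_eq_zero
    intro i hi
    have : (descPochhammer ℝ k).eval ((i : ℕ) : ℝ) = ((i.descFactorial k : ℕ) : ℝ) := by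
      exact_mod_cast descPochhammer_eval_eq_descFactorial ℝ i k
    rw [this, Nat.descFactorial_eq_zero_iff_lt.2 (Finset.mem_range.1 hi)]
    simp
  rw [hz, add_zero] at h3
  exact h3

/-- For real `r`, natural `p`, and `|x| < 1`,
`Σ_{n=0}^∞ C(r,n) n^p x^n = (1+x)^r Σ_{k=0}^p S(p,k) r(r−1)⋯(r−k+1) (x/(1+x))^k`
(with `0^0 = 1`), where `C(r,n) = r(r−1)⋯(r−n+1)/n!` and the series converges absolutely.
Here `(descPochhammer ℝ k).eval r = r(r−1)⋯(r−k+1)` is the falling factorial. -/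
theorem binomial_series_geomPoly (r : ℝ) (p : ℕ) (x : ℝ) (hx : |x| < 1) :
    (Summable fun n : ℕ =>
      |(descPochhammer ℝ n).eval r / n.factorial * (n : ℝ) ^ p * x ^ n|) ∧
    HasSum (fun n : ℕ => (descPochhammer ℝ n).eval r / n.factorial * (n : ℝ) ^ p * x ^ n)
      ((1 + x) ^ r * ∑ k ∈ Finset.range (p + 1),
        (stirling2 p k : ℝ) * (descPochhammer ℝ k).eval r * (x / (1 + x)) ^ k) := by
  have hpos : (0:ℝ) < 1 + x := by
    have := abs_lt.1 hx
    linarith [this.1]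
  constructor
  · have h := summable_norm_bc r p hx
    apply h.congr
    intro n
    simp only [bc, Real.norm_eq_abs, abs_mul, abs_div, abs_pow, Nat.abs_cast]
  · have hk : ∀ k ∈ range (p + 1),
        HasSum (fun n : ℕ => (stirling2 p k : ℝ) *
            (bc r n * (descPochhammer ℝ k).eval (n : ℝ) * x ^ n))
          ((stirling2 p k : ℝ) *
            ((descPochhammer ℝ k).eval r * x ^ k * (1 + x) ^ (r - k))) :=
      fun k _ => (hasSum_desc r hx k).mul_left _
    have hsum := hasSum_sum hk
    have e1 : (fun n : ℕ => ∑ k ∈ range (p + 1), (stirling2 p k : ℝ) *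
          (bc r n * (descPochhammer ℝ k).eval (n : ℝ) * x ^ n))
        = fun n : ℕ => (descPochhammer ℝ n).eval r / n.factorial * (n : ℝ) ^ p * x ^ n := by
      funext n
      have : ((descPochhammer ℝ n).eval r / n.factorial : ℝ) = bc r n := rfl
      rw [this, pow_eq_sum_stirling p ((n : ℕ) : ℝ), Finset.mul_sum, Finset.sum_mul]
      apply Finset.sum_congr rfl
      intro k _
      ring
    have e2 : ∑ k ∈ range (p + 1), (stirling2 p k : ℝ) *
          ((descPochhammer ℝ k).eval r * x ^ k * (1 + x) ^ (r - k))
        = (1 + x) ^ r * ∑ k ∈ Finset.range (p + 1),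
          (stirling2 p k : ℝ) * (descPochhammer ℝ k).eval r * (x / (1 + x)) ^ k := by
      rw [Finset.mul_sum]
      apply Finset.sum_congr rfl
      intro k _
      rw [Real.rpow_sub hpos, Real.rpow_natCast, div_pow]
      have hne : (1 + x) ^ k ≠ 0 := pow_ne_zero k hpos.ne'
      field_simp
    rw [e1, e2] at hsum
    exact hsum
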